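/- Fix n ≥ 1, p ≥ 1 and a horizon k ≥ 0. Let π₀ : ℝᵖ × ℝⁿ × ℝⁿ → [0,∞) (joint prior density of (Θ, Z₀, Z₁)), q_i : ℝᵖ × ℝⁿ × ℝⁿ → [0,∞) (1 ≤ i ≤ k, parameterized transition densities) and g_i : ℝᵖ × ℝⁿ → [0,∞) (0 ≤ i ≤ k+1, likelihoods of fixed observations) be measurable. Define f₀(θ,z,z') = π₀(θ,z,z') g₀(θ,z) g₁(θ,z') and f_i(θ,z,z') = q_i(θ,z,z') g_{i+1}(θ,z') for 1 ≤ i ≤ k, and ρ(θ, z₀,…,z_{k+1}) = f₀(θ,z₀,z₁) ∏_{i=1}^{k} f_i(θ,z_i,z_{i+1}); assume ρ is strictly positive with 0 < ∫ρ < ∞ and let Π be the probability measure on ℝᵖ × (ℝⁿ)^{k+2} with density ρ/∫ρ. Let η_Θ (on ℝᵖ, with strictly positive density e_Θ) and η₀,…,η_{k+1} (on ℝⁿ, with strictly positive densities e_i) be absolutely continuous probability measures. Suppose M₀,…,M_k : ℝᵖ × ℝⁿ × ℝⁿ → ℝᵖ × ℝⁿ × ℝⁿ are measurable maps of the form M_i(x_θ,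 x, y) = (M_i^Θ(x_θ), M_i⁰(x_θ, x, y), M_i¹(x_θ, y)) satisfying: c₀ := ∫ f₀ and Measure.map M₀ (η_Θ ⊗ η₀ ⊗ η₁) = measure with density f₀/c₀; and for 1 ≤ i ≤ k, with 𝔗^Θ_{i-1} := M₀^Θ ∘ ⋯ ∘ M_{i-1}^Θ, c_i := ∫∫∫ e_Θ(θ) e_i(x) f_i(𝔗^Θ_{i-1}(θ), M_{i-1}¹(θ,x), y) dθ dx dy ∈ (0,∞) and Measure.map M_i (η_Θ ⊗ η_i ⊗ η_{i+1}) = measure with density (θ,x,y) ↦ e_Θ(θ) e_i(x) f_i(𝔗^Θ_{i-1}(θ), M_{i-1}¹(θ,x), y)/c_i. Then the map (x_θ, x_{k+1}) ↦ (𝔗^Θ_k(x_θ), M_k¹(x_θ, x_{k+1})) pushes η_Θ ⊗ η_{k+1} forward to the marginal of Π on the coordinates (θ, z_{k+1}), i.e., the joint filtering distribution π_{Θ, Z_{k+1} | y_{0:k+1}}. -/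

import Mathlib

open MeasureTheory ProbabilityTheory

/-- The pairwise potentials for a state-space model with static parameters `θ`:
`f₀(θ,z,z') = π₀(θ,z,z') g₀(θ,z) g₁(θ,z')` and `f_i(θ,z,z') = q_i(θ,z,z') g_{i+1}(θ,z')`
for `i ≥ 1`. -/
noncomputable def jpotential {p n : ℕ}
    (π₀ : (Fin p → ℝ) → (Fin n → ℝ) → (Fin n → ℝ) → ℝ)
    (q : ℕ → (Fin p → ℝ) → (Fin n → ℝ) → (Fin n → ℝ) → ℝ)
    (g : ℕ → (Fin p → ℝ) → (Fin n → ℝ) → ℝ) :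
    ℕ → (Fin p → ℝ) → (Fin n → ℝ) → (Fin n → ℝ) → ℝ
  | 0 => fun θ z z' => π₀ θ z z' * g 0 θ z * g 1 θ z'
  | (i + 1) => fun θ z z' => q (i + 1) θ z z' * g (i + 2) θ z'

/-- The unnormalized joint posterior density
`ρ(θ, z₀,…,z_{k+1}) = f₀(θ,z₀,z₁) ∏_{i=1}^{k} f_i(θ,z_i,z_{i+1})`. -/
noncomputable def jsmoothingDensity {p n k : ℕ}
    (π₀ : (Fin p → ℝ) → (Fin n → ℝ) → (Fin n → ℝ) → ℝ)
    (q : ℕ → (Fin p → ℝ) → (Fin n → ℝ) → (Fin n → ℝ) → ℝ)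
    (g : ℕ → (Fin p → ℝ) → (Fin n → ℝ) → ℝ)
    (w : (Fin p → ℝ) × (Fin (k + 2) → Fin n → ℝ)) : ℝ :=
  ∏ i : Fin (k + 1), jpotential π₀ q g i w.1 (w.2 i.castSucc) (w.2 i.succ)

/-- The composition `𝔗^Θ_i = M₀^Θ ∘ ⋯ ∘ M_i^Θ` (with `M_i^Θ` applied first). -/
noncomputable def thetaFlow {p : ℕ} (MΘ : ℕ → (Fin p → ℝ) → (Fin p → ℝ)) :
    ℕ → (Fin p → ℝ) → (Fin p → ℝ)
  | 0 => MΘ 0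
  | (i + 1) => thetaFlow MΘ i ∘ MΘ (i + 1)

open scoped ENNReal

section JointFilterAux

theorem map_proj13_withDensity {α β γ : Type*} [MeasurableSpace α] [MeasurableSpace β]
    [MeasurableSpace γ] (μ : Measure α) (ν : Measure β) (ξ : Measure γ)
    [SFinite μ] [SFinite ν] [SFinite ξ]
    {h : α × β × γ → ℝ≥0∞} (hh : Measurable h) :
    Measure.map (fun w : α × β × γ => (w.1, w.2.2)) ((μ.prod (ν.prod ξ)).withDensity h) =
      (μ.prod ξ).withDensity (fun x => ∫⁻ b, h (x.1, b, x.2) ∂ν) := by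
  have hproj : Measurable (fun w : α × β × γ => (w.1, w.2.2)) :=
    measurable_fst.prodMk (measurable_snd.snd)
  have hg : Measurable (fun x : α × γ => ∫⁻ b, h (x.1, b, x.2) ∂ν) := by
    have : Measurable (Function.uncurry fun (x : α × γ) (b : β) => h (x.1, b, x.2)) := by
      apply hh.comp
      exact (measurable_fst.fst).prodMk ((measurable_snd).prodMk measurable_fst.snd)
    exact this.lintegral_prod_right
  ext s hs
  rw [Measure.map_apply hproj hs, withDensity_apply _ (hproj hs), withDensity_apply _ hs,
    ← lintegral_indicator (hproj hs), ← lintegral_indicator hs]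
  have hind : ∀ w : α × β × γ, ((fun w : α × β × γ => (w.1, w.2.2)) ⁻¹' s).indicator h w
      = s.indicator (fun _ => (1:ℝ≥0∞)) (w.1, w.2.2) * h w := by
    intro w; by_cases hw : (w.1, w.2.2) ∈ s <;> simp [Set.indicator, hw]
  simp_rw [hind]
  have hmeas1 : Measurable fun w : α × β × γ =>
      s.indicator (fun _ => (1:ℝ≥0∞)) (w.1, w.2.2) * h w :=
    ((measurable_const.indicator hs).comp hproj).mul hh
  rw [lintegral_prod _ hmeas1.aemeasurable]
  have inner : ∀ a : α, ∫⁻ z, s.indicator (fun _ => (1:ℝ≥0∞)) (a, z.2) * h (a, z) ∂(ν.prod ξ)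
      = ∫⁻ c, s.indicator (fun _ => (1:ℝ≥0∞)) (a, c) * ∫⁻ b, h (a, b, c) ∂ν ∂ξ := by
    intro a
    rw [lintegral_prod_symm]
    · refine lintegral_congr fun c => ?_
      show (∫⁻ (x : β), s.indicator (fun _ => (1:ℝ≥0∞)) (a, c) * h (a, x, c) ∂ν) = _
      rw [lintegral_const_mul' _ _ ?_]
      · exact Set.indicator_le (fun _ _ => le_refl 1) (a, c) |>.trans_lt ENNReal.one_lt_top |>.ne
    · exact (((measurable_const.indicator hs).comp
        (measurable_const.prodMk measurable_snd)).mul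
        (hh.comp (measurable_const.prodMk measurable_id))).aemeasurable
  simp_rw [inner]
  rw [← lintegral_prod (fun x : α × γ => s.indicator (fun _ => (1:ℝ≥0∞)) x * ∫⁻ b, h (x.1, b, x.2) ∂ν) (((measurable_const.indicator hs)).mul hg).aemeasurable]
  refine lintegral_congr fun x => ?_
  by_cases hx : x ∈ s <;> simp [Set.indicator, hx]

theorem map_proj13_prod {α β γ : Type*} [MeasurableSpace α] [MeasurableSpace β]
    [MeasurableSpace γ] (μ : Measure α) (ν : Measure β) (ξ : Measure γ)
    [SFinite μ] [SFinite ξ] [IsProbabilityMeasure ν] :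
    Measure.map (fun w : α × β × γ => (w.1, w.2.2)) (μ.prod (ν.prod ξ)) = μ.prod ξ := by
  have h : (fun w : α × β × γ => (w.1, w.2.2)) = Prod.map id Prod.snd := rfl
  rw [h, ← Measure.map_prod_map _ _ measurable_id measurable_snd, Measure.map_id,
    Measure.map_snd_prod, measure_univ, one_smul]

theorem lintegral_indicator_one_comp {α β : Type*} [MeasurableSpace α] [MeasurableSpace β]
    {μ : Measure α} {g : α → β} (hg : Measurable g) {s : Set β} (hs : MeasurableSet s) :
    ∫⁻ x, s.indicator (fun _ => (1:ℝ≥0∞)) (g x) ∂μ = μ (g ⁻¹' s) := by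
  have h : ∀ x, s.indicator (fun _ => (1:ℝ≥0∞)) (g x)
      = (g ⁻¹' s).indicator (fun _ => (1:ℝ≥0∞)) x := by
    intro x; by_cases h : g x ∈ s <;> simp [Set.indicator, h]
  simp_rw [h]
  rw [lintegral_indicator (hg hs)]
  simp

end JointFilterAux

/-- Backward recursion of marginal integrals. -/
noncomputable def jIter {p n : ℕ}
    (F : ℕ → (Fin p → ℝ) → (Fin n → ℝ) → (Fin n → ℝ) → ℝ≥0∞) :
    ℕ → (Fin p → ℝ) → (Fin n → ℝ) → ℝ≥0∞
  | 0 => fun θ c => ∫⁻ b, F 0 θ b c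
  | (m + 1) => fun θ c => ∫⁻ b, jIter F m θ b * F (m + 1) θ b c

lemma jIter_measurable {p n : ℕ}
    {F : ℕ → (Fin p → ℝ) → (Fin n → ℝ) → (Fin n → ℝ) → ℝ≥0∞} (m : ℕ)
    (hF : ∀ i ≤ m, Measurable
      (fun w : (Fin p → ℝ) × (Fin n → ℝ) × (Fin n → ℝ) => F i w.1 w.2.1 w.2.2)) :
    Measurable (fun x : (Fin p → ℝ) × (Fin n → ℝ) => jIter F m x.1 x.2) := by
  induction m with
  | zero =>
    have : Measurable (Function.uncurry
        fun (x : (Fin p → ℝ) × (Fin n → ℝ)) (b : Fin n → ℝ) => F 0 x.1 b x.2) :=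
      (hF 0 le_rfl).comp
        ((measurable_fst.fst).prodMk (measurable_snd.prodMk measurable_fst.snd))
    exact this.lintegral_prod_right
  | succ m ih =>
    have ih' := ih (fun i hi => hF i (hi.trans (Nat.le_succ m)))
    have : Measurable (Function.uncurry
        fun (x : (Fin p → ℝ) × (Fin n → ℝ)) (b : Fin n → ℝ) =>
          jIter F m x.1 b * F (m + 1) x.1 b x.2) := by
      refine Measurable.mul ?_ ?_
      · exact ih'.comp ((measurable_fst.fst).prodMk measurable_snd)
      · exact (hF (m + 1) le_rfl).comp
          ((measurable_fst.fst).prodMk (measurable_snd.prodMk measurable_fst.snd))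
    exact this.lintegral_prod_right

lemma measurable_snoc_pair {X : Type*} [MeasurableSpace X] {m : ℕ} :
    Measurable (fun z : X × (Fin m → X) => (Fin.snoc z.2 z.1 : Fin (m + 1) → X)) := by
  rw [measurable_pi_iff]
  intro j
  induction j using Fin.lastCases with
  | last => simpa using measurable_fst
  | cast i => simp; exact (measurable_pi_apply i).comp measurable_snd

/-- The iterated-integral representation of the marginal of the product density. -/
lemma lintegral_snoc_prod {p n : ℕ}
    {F : ℕ → (Fin p → ℝ) → (Fin n → ℝ) → (Fin n → ℝ) → ℝ≥0∞} (m : ℕ)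
    (hF : ∀ i ≤ m, Measurable
      (fun w : (Fin p → ℝ) × (Fin n → ℝ) × (Fin n → ℝ) => F i w.1 w.2.1 w.2.2))
    (hFtop : ∀ i θ z z', F i θ z z' ≠ ∞)
    (θ : Fin p → ℝ) (c : Fin n → ℝ) :
    ∫⁻ y : Fin (m + 1) → (Fin n → ℝ),
        ∏ i : Fin (m + 1), F i θ ((Fin.snoc y c : Fin (m + 2) → Fin n → ℝ) i.castSucc)
          ((Fin.snoc y c : Fin (m + 2) → Fin n → ℝ) i.succ)
      = jIter F m θ c := by
  induction m generalizing c with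
  | zero =>
    have key : ∀ y : Fin 1 → (Fin n → ℝ),
        (∏ i : Fin 1, F i θ ((Fin.snoc y c : Fin 2 → Fin n → ℝ) i.castSucc)
          ((Fin.snoc y c : Fin 2 → Fin n → ℝ) i.succ))
          = F 0 θ (y 0) c := by
      intro y
      rw [Fin.prod_univ_one]
      have h1 : ((0 : Fin 1).succ : Fin 2) = Fin.last 1 := rfl
      have h2 : ((0 : Fin 1).castSucc : Fin 2) = Fin.castSucc 0 := rfl
      rw [h1, Fin.snoc_last, h2, Fin.snoc_castSucc]
      rfl
    simp_rw [key]
    have hmp := volume_preserving_funUnique (Fin 1) (Fin n → ℝ)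
    have := hmp.lintegral_comp_emb (MeasurableEquiv.measurableEmbedding _)
      (fun b => F 0 θ b c)
    simp [MeasurableEquiv.funUnique, jIter] at this; exact this
  | succ m ih =>
    have ih' := ih (fun i hi => hF i (hi.trans (Nat.le_succ m)))
    set e := MeasurableEquiv.piFinSuccAbove (fun _ : Fin (m + 2) => Fin n → ℝ) (Fin.last (m + 1))
    set f : (Fin n → ℝ) × (Fin (m + 1) → Fin n → ℝ) → ℝ≥0∞ := fun z =>
      (∏ i : Fin (m + 1), F i θ ((Fin.snoc z.2 z.1 : Fin (m + 2) → Fin n → ℝ) i.castSucc)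
        ((Fin.snoc z.2 z.1 : Fin (m + 2) → Fin n → ℝ) i.succ))
        * F (m + 1) θ z.1 c with hf
    have key : ∀ y : Fin (m + 2) → Fin n → ℝ,
        (∏ i : Fin (m + 2), F i θ ((Fin.snoc y c : Fin (m + 3) → Fin n → ℝ) i.castSucc)
          ((Fin.snoc y c : Fin (m + 3) → Fin n → ℝ) i.succ))
          = f (e y) := by
      intro y
      have he : e y = (y (Fin.last (m + 1)), fun j => y j.castSucc) := by
        simp [e, MeasurableEquiv.piFinSuccAbove, Fin.succAbove_last]
        rfl
      rw [he, hf]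
      simp only
      have hsnoc : (Fin.snoc (fun j : Fin (m+1) => y j.castSucc) (y (Fin.last (m+1)))
          : Fin (m + 2) → Fin n → ℝ) = y := by
        funext j
        induction j using Fin.lastCases with
        | last => simp
        | cast i => simp
      rw [hsnoc, Fin.prod_univ_castSucc]
      congr 1
      · refine Finset.prod_congr rfl fun i _ => ?_
        rw [Fin.coe_castSucc, Fin.succ_castSucc, Fin.snoc_castSucc, Fin.snoc_castSucc]
      · rw [Fin.val_last, Fin.snoc_castSucc, Fin.succ_last, Fin.snoc_last]
    rw [lintegral_congr key]
    have hmp := volume_preserving_piFinSuccAbove (fun _ : Fin (m + 2) => Fin n → ℝ) (Fin.last (m + 1))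
    rw [hmp.lintegral_comp_emb (MeasurableEquiv.measurableEmbedding _) f]
    rw [MeasureTheory.Measure.volume_eq_prod, lintegral_prod]
    · have inner : ∀ b : Fin n → ℝ, ∫⁻ y' : Fin (m + 1) → Fin n → ℝ, f (b, y') = jIter F m θ b * F (m + 1) θ b c := by
        intro b
        rw [hf]
        simp only
        rw [lintegral_mul_const' _ _ (hFtop _ _ _ _), ih']
      simp_rw [inner]
      rfl
    · refine (Measurable.mul ?_ ?_).aemeasurable
      · refine Finset.measurable_prod _ fun i _ => ?_
        have hg : Measurable (fun z : (Fin n → ℝ) × (Fin (m + 1) → Fin n → ℝ) =>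
            ((θ, (Fin.snoc z.2 z.1 : Fin (m + 2) → Fin n → ℝ) i.castSucc,
              (Fin.snoc z.2 z.1 : Fin (m + 2) → Fin n → ℝ) i.succ) :
              (Fin p → ℝ) × (Fin n → ℝ) × (Fin n → ℝ))) := by
          refine Measurable.prodMk measurable_const (Measurable.prodMk ?_ ?_)
          · exact Measurable.eval measurable_snoc_pair
          · exact Measurable.eval measurable_snoc_pair
        exact (hF i (le_of_lt i.isLt)).comp hg
      · exact (hF (m + 1) le_rfl).comp
          (measurable_const.prodMk (measurable_fst.prodMk measurable_const))
lemma lintegral_pi_last_prod {p n : ℕ}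
    {F : ℕ → (Fin p → ℝ) → (Fin n → ℝ) → (Fin n → ℝ) → ℝ≥0∞} (m : ℕ)
    (hF : ∀ i ≤ m, Measurable
      (fun w : (Fin p → ℝ) × (Fin n → ℝ) × (Fin n → ℝ) => F i w.1 w.2.1 w.2.2))
    (hFtop : ∀ i θ z z', F i θ z z' ≠ ∞)
    (θ : Fin p → ℝ) (C : ℝ≥0∞) (hC : C ≠ ∞)
    (ind : (Fin n → ℝ) → ℝ≥0∞) (hindm : Measurable ind) (hind : ∀ cc, ind cc ≠ ∞) :
    ∫⁻ z : Fin (m + 2) → Fin n → ℝ,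
        ind (z (Fin.last (m + 1))) *
          ((∏ i : Fin (m + 1), F i θ (z i.castSucc) (z i.succ)) * C)
      = ∫⁻ cc, ind cc * (jIter F m θ cc * C) := by
  have hmp := volume_preserving_piFinSuccAbove
    (fun _ : Fin (m + 2) => Fin n → ℝ) (Fin.last (m + 1))
  have hkey : ∀ z : Fin (m + 2) → Fin n → ℝ,
      ind (z (Fin.last (m + 1))) *
        ((∏ i : Fin (m + 1), F i θ (z i.castSucc) (z i.succ)) * C)
      = (fun zz : (Fin n → ℝ) × (Fin (m + 1) → Fin n → ℝ) =>
          ind zz.1 * ((∏ i : Fin (m + 1), F i θ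
            ((Fin.snoc zz.2 zz.1 : Fin (m + 2) → Fin n → ℝ) i.castSucc)
            ((Fin.snoc zz.2 zz.1 : Fin (m + 2) → Fin n → ℝ) i.succ)) * C))
        ((MeasurableEquiv.piFinSuccAbove (fun _ : Fin (m + 2) => Fin n → ℝ)
          (Fin.last (m + 1))) z) := by
    intro z
    have hez : (MeasurableEquiv.piFinSuccAbove (fun _ : Fin (m + 2) => Fin n → ℝ)
        (Fin.last (m + 1))) z = (z (Fin.last (m + 1)), fun j => z j.castSucc) := by
      simp [MeasurableEquiv.piFinSuccAbove, Fin.succAbove_last]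
      rfl
    rw [hez]
    simp only
    have hsnoc : (Fin.snoc (fun j : Fin (m + 1) => z j.castSucc) (z (Fin.last (m + 1)))
        : Fin (m + 2) → Fin n → ℝ) = z := by
      funext j
      induction j using Fin.lastCases with
      | last => simp
      | cast i => simp
    rw [hsnoc]
  rw [lintegral_congr hkey]
  refine Eq.trans (hmp.lintegral_comp_emb (MeasurableEquiv.measurableEmbedding _)
    (fun zz : (Fin n → ℝ) × (Fin (m + 1) → Fin n → ℝ) =>
      ind zz.1 * ((∏ i : Fin (m + 1), F i θ
        ((Fin.snoc zz.2 zz.1 : Fin (m + 2) → Fin n → ℝ) i.castSucc)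
        ((Fin.snoc zz.2 zz.1 : Fin (m + 2) → Fin n → ℝ) i.succ)) * C))) ?_
  rw [MeasureTheory.Measure.volume_eq_prod, lintegral_prod]
  · refine lintegral_congr fun cc => ?_
    have hpt : ∀ y : Fin (m + 1) → Fin n → ℝ,
        ind cc * ((∏ i : Fin (m + 1), F i θ
          ((Fin.snoc y cc : Fin (m + 2) → Fin n → ℝ) i.castSucc)
          ((Fin.snoc y cc : Fin (m + 2) → Fin n → ℝ) i.succ)) * C)
        = (∏ i : Fin (m + 1), F i θ
          ((Fin.snoc y cc : Fin (m + 2) → Fin n → ℝ) i.castSucc)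
          ((Fin.snoc y cc : Fin (m + 2) → Fin n → ℝ) i.succ)) * (ind cc * C) := by
      intro y; ring
    refine Eq.trans (lintegral_congr fun y => hpt y) ?_
    rw [lintegral_mul_const' _ _ (ENNReal.mul_ne_top (hind cc) hC),
      lintegral_snoc_prod m hF hFtop θ cc]
    ring
  · refine (Measurable.mul ?_ (Measurable.mul ?_ measurable_const)).aemeasurable
    · exact hindm.comp measurable_fst
    · refine Finset.measurable_prod _ fun i _ => ?_
      have hg2 : Measurable (fun zz : (Fin n → ℝ) × (Fin (m + 1) → Fin n → ℝ) =>
          ((θ, (Fin.snoc zz.2 zz.1 : Fin (m + 2) → Fin n → ℝ) i.castSucc,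
            (Fin.snoc zz.2 zz.1 : Fin (m + 2) → Fin n → ℝ) i.succ) :
            (Fin p → ℝ) × (Fin n → ℝ) × (Fin n → ℝ))) := by
        refine Measurable.prodMk measurable_const (Measurable.prodMk ?_ ?_)
        · exact Measurable.eval measurable_snoc_pair
        · exact Measurable.eval measurable_snoc_pair
      exact (hF i (Nat.lt_succ_iff.mp i.isLt)).comp hg2

set_option maxHeartbeats 2000000 in
/-- **Joint parameter and state filtering via decomposable transports.**
Under the transport recursion of the decomposition theorem for joint parameter and state
estimation, the map `(x_θ, x_{k+1}) ↦ (𝔗^Θ_k(x_θ), M_k¹(x_θ, x_{k+1}))` pushes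
`η_Θ ⊗ η_{k+1}` forward to the `(θ, z_{k+1})`-marginal of the joint posterior `Π`. -/
theorem joint_filtering_of_recursion
    (p n k : ℕ) (hp : 0 < p) (hn : 0 < n)
    (π₀ : (Fin p → ℝ) → (Fin n → ℝ) → (Fin n → ℝ) → ℝ)
    (q : ℕ → (Fin p → ℝ) → (Fin n → ℝ) → (Fin n → ℝ) → ℝ)
    (g : ℕ → (Fin p → ℝ) → (Fin n → ℝ) → ℝ)
    (hπ₀ : Measurable (fun w : (Fin p → ℝ) × (Fin n → ℝ) × (Fin n → ℝ) => π₀ w.1 w.2.1 w.2.2))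
    (hπ₀pos : ∀ θ z z', 0 ≤ π₀ θ z z')
    (hq : ∀ i, 1 ≤ i → i ≤ k →
      Measurable (fun w : (Fin p → ℝ) × (Fin n → ℝ) × (Fin n → ℝ) => q i w.1 w.2.1 w.2.2))
    (hqpos : ∀ i, 1 ≤ i → i ≤ k → ∀ θ z z', 0 ≤ q i θ z z')
    (hg : ∀ i ≤ k + 1, Measurable (fun w : (Fin p → ℝ) × (Fin n → ℝ) => g i w.1 w.2))
    (hgpos : ∀ i ≤ k + 1, ∀ θ z, 0 ≤ g i θ z)
    (hρpos : ∀ w, 0 < jsmoothingDensity (k := k) π₀ q g w)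
    (hρint : Integrable (jsmoothingDensity (k := k) π₀ q g))
    (hρmass : 0 < ∫ w, jsmoothingDensity (k := k) π₀ q g w)
    (ηΘ : Measure (Fin p → ℝ)) (eΘ : (Fin p → ℝ) → ℝ)
    (hηΘprob : IsProbabilityMeasure ηΘ) (heΘmeas : Measurable eΘ)
    (hηΘd : ηΘ = (volume : Measure (Fin p → ℝ)).withDensity (fun θ => ENNReal.ofReal (eΘ θ)))
    (heΘpos : ∀ θ, 0 < eΘ θ)
    (η : ℕ → Measure (Fin n → ℝ)) (e : ℕ → (Fin n → ℝ) → ℝ)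
    (hηprob : ∀ i ≤ k + 1, IsProbabilityMeasure (η i))
    (hemeas : ∀ i ≤ k + 1, Measurable (e i))
    (hηd : ∀ i ≤ k + 1,
      η i = (volume : Measure (Fin n → ℝ)).withDensity (fun x => ENNReal.ofReal (e i x)))
    (hepos : ∀ i ≤ k + 1, ∀ x, 0 < e i x)
    (MΘ : ℕ → (Fin p → ℝ) → (Fin p → ℝ))
    (M0 : ℕ → (Fin p → ℝ) × (Fin n → ℝ) × (Fin n → ℝ) → (Fin n → ℝ))
    (M1 : ℕ → (Fin p → ℝ) × (Fin n → ℝ) → (Fin n → ℝ))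
    (hMΘ : ∀ i ≤ k, Measurable (MΘ i))
    (hM0 : ∀ i ≤ k, Measurable (M0 i)) (hM1 : ∀ i ≤ k, Measurable (M1 i))
    (c : ℕ → ℝ)
    (hc0 : c 0 = ∫ w : (Fin p → ℝ) × (Fin n → ℝ) × (Fin n → ℝ),
      jpotential π₀ q g 0 w.1 w.2.1 w.2.2)
    (hf0int : Integrable (fun w : (Fin p → ℝ) × (Fin n → ℝ) × (Fin n → ℝ) =>
      jpotential π₀ q g 0 w.1 w.2.1 w.2.2))
    (hmap0 : Measure.map
        (fun w : (Fin p → ℝ) × (Fin n → ℝ) × (Fin n → ℝ) =>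
          (MΘ 0 w.1, M0 0 w, M1 0 (w.1, w.2.2)))
        (ηΘ.prod ((η 0).prod (η 1))) =
      (volume : Measure ((Fin p → ℝ) × (Fin n → ℝ) × (Fin n → ℝ))).withDensity
        (fun w => ENNReal.ofReal (jpotential π₀ q g 0 w.1 w.2.1 w.2.2 / c 0)))
    (hci : ∀ i, 1 ≤ i → i ≤ k →
      c i = ∫ w : (Fin p → ℝ) × (Fin n → ℝ) × (Fin n → ℝ),
        eΘ w.1 * e i w.2.1 *
          jpotential π₀ q g i (thetaFlow MΘ (i - 1) w.1) (M1 (i - 1) (w.1, w.2.1)) w.2.2)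
    (hciint : ∀ i, 1 ≤ i → i ≤ k →
      Integrable (fun w : (Fin p → ℝ) × (Fin n → ℝ) × (Fin n → ℝ) =>
        eΘ w.1 * e i w.2.1 *
          jpotential π₀ q g i (thetaFlow MΘ (i - 1) w.1) (M1 (i - 1) (w.1, w.2.1)) w.2.2))
    (hcipos : ∀ i, 1 ≤ i → i ≤ k → 0 < c i)
    (hmapi : ∀ i, 1 ≤ i → i ≤ k →
      Measure.map
          (fun w : (Fin p → ℝ) × (Fin n → ℝ) × (Fin n → ℝ) =>
            (MΘ i w.1, M0 i w, M1 i (w.1, w.2.2)))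
          (ηΘ.prod ((η i).prod (η (i + 1)))) =
        (volume : Measure ((Fin p → ℝ) × (Fin n → ℝ) × (Fin n → ℝ))).withDensity
          (fun w => ENNReal.ofReal
            (eΘ w.1 * e i w.2.1 *
              jpotential π₀ q g i (thetaFlow MΘ (i - 1) w.1) (M1 (i - 1) (w.1, w.2.1)) w.2.2
              / c i))) :
    Measure.map
        (fun w : (Fin p → ℝ) × (Fin n → ℝ) => (thetaFlow MΘ k w.1, M1 k w))
        (ηΘ.prod (η (k + 1))) =
      Measure.map
        (fun w : (Fin p → ℝ) × (Fin (k + 2) → Fin n → ℝ) => (w.1, w.2 (Fin.last (k + 1))))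
        ((volume : Measure ((Fin p → ℝ) × (Fin (k + 2) → Fin n → ℝ))).withDensity
          (fun w => ENNReal.ofReal (jsmoothingDensity (k := k) π₀ q g w /
            ∫ w, jsmoothingDensity (k := k) π₀ q g w))) := by
  classical
  set F : ℕ → (Fin p → ℝ) → (Fin n → ℝ) → (Fin n → ℝ) → ℝ≥0∞ :=
    fun i θ z z' => ENNReal.ofReal (jpotential π₀ q g i θ z z') with hFdef
  set K : ℕ → ℝ≥0∞ := fun i => ENNReal.ofReal (c i) with hKdef
  set P : ℕ → ℝ≥0∞ := fun m => ∏ i ∈ Finset.range (m + 1), K i with hPdef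
  haveI := hηΘprob
  -- basic pointwise facts
  have hfnn : ∀ i, i ≤ k → ∀ θ z z', 0 ≤ jpotential π₀ q g i θ z z' := by
    intro i hi θ z z'
    cases i with
    | zero =>
      show 0 ≤ π₀ θ z z' * g 0 θ z * g 1 θ z'
      exact mul_nonneg (mul_nonneg (hπ₀pos θ z z') (hgpos 0 (by omega) θ z))
        (hgpos 1 (by omega) θ z')
    | succ j =>
      show 0 ≤ q (j + 1) θ z z' * g (j + 2) θ z'
      exact mul_nonneg (hqpos (j + 1) (by omega) (by omega) θ z z')
        (hgpos (j + 2) (by omega) θ z')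
  have hfpos : ∀ i, i ≤ k → ∀ θ z z', 0 < jpotential π₀ q g i θ z z' := by
    intro i hi θ z z'
    rcases lt_or_eq_of_le (hfnn i hi θ z z') with h | h
    · exact h
    · exfalso
      set i' : Fin (k + 1) := ⟨i, by omega⟩ with hi'
      set v : Fin (k + 2) → Fin n → ℝ :=
        fun j => if j = i'.castSucc then z else if j = i'.succ then z' else 0 with hv
      have h1 : v i'.castSucc = z := by simp [hv]
      have h2 : v i'.succ = z' := by
        have hne : i'.succ ≠ i'.castSucc := (Fin.castSucc_lt_succ (i := i')).ne'
        simp [hv, hne]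
      have hρ := hρpos (θ, v)
      have hzero : jsmoothingDensity (k := k) π₀ q g (θ, v) = 0 := by
        unfold jsmoothingDensity
        refine Finset.prod_eq_zero (Finset.mem_univ i') ?_
        show jpotential π₀ q g (↑i') θ (v i'.castSucc) (v i'.succ) = 0
        rw [h1, h2]; exact h.symm
      rw [hzero] at hρ; exact lt_irrefl 0 hρ
  -- measurability
  have hjmeas : ∀ i, i ≤ k → Measurable
      (fun w : (Fin p → ℝ) × (Fin n → ℝ) × (Fin n → ℝ) =>
        jpotential π₀ q g i w.1 w.2.1 w.2.2) := by
    intro i hi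
    cases i with
    | zero =>
      show Measurable fun w : (Fin p → ℝ) × (Fin n → ℝ) × (Fin n → ℝ) =>
        π₀ w.1 w.2.1 w.2.2 * g 0 w.1 w.2.1 * g 1 w.1 w.2.2
      exact (hπ₀.mul ((hg 0 (by omega)).comp
        (measurable_fst.prodMk measurable_snd.fst))).mul
        ((hg 1 (by omega)).comp (measurable_fst.prodMk measurable_snd.snd))
    | succ j =>
      show Measurable fun w : (Fin p → ℝ) × (Fin n → ℝ) × (Fin n → ℝ) =>
        q (j + 1) w.1 w.2.1 w.2.2 * g (j + 2) w.1 w.2.2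
      exact (hq (j + 1) (by omega) (by omega)).mul
        ((hg (j + 2) (by omega)).comp (measurable_fst.prodMk measurable_snd.snd))
  have hFmeas : ∀ i, i ≤ k → Measurable
      (fun w : (Fin p → ℝ) × (Fin n → ℝ) × (Fin n → ℝ) => F i w.1 w.2.1 w.2.2) :=
    fun i hi => (hjmeas i hi).ennreal_ofReal
  have hFtop : ∀ (i : ℕ) θ z z', F i θ z z' ≠ ∞ := fun _ _ _ _ => ENNReal.ofReal_ne_top
  have hTmeas : ∀ m, m ≤ k → Measurable (thetaFlow MΘ m) := by
    intro m
    induction m with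
    | zero =>
      intro h
      show Measurable (MΘ 0)
      exact hMΘ 0 h
    | succ m ih =>
      intro h
      show Measurable (thetaFlow MΘ m ∘ MΘ (m + 1))
      exact (ih (by omega)).comp (hMΘ (m + 1) h)
  have hImeas : ∀ m, m ≤ k →
      Measurable (fun x : (Fin p → ℝ) × (Fin n → ℝ) => jIter F m x.1 x.2) :=
    fun m hm => jIter_measurable m (fun i hi => hFmeas i (hi.trans hm))
  -- positivity of normalizing constants
  have hc0pos : 0 < c 0 := by
    rw [hc0, integral_pos_iff_support_of_nonneg
      (fun w => hfnn 0 (by omega) _ _ _) hf0int]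
    have hsupp : Function.support (fun w : (Fin p → ℝ) × (Fin n → ℝ) × (Fin n → ℝ) =>
        jpotential π₀ q g 0 w.1 w.2.1 w.2.2) = Set.univ :=
      Set.eq_univ_of_forall fun w => (hfpos 0 (by omega) _ _ _).ne'
    rw [hsupp]
    exact IsOpen.measure_pos _ isOpen_univ ⟨(0, 0, 0), trivial⟩
  have hK0 : ∀ i, i ≤ k → K i ≠ 0 := by
    intro i hi
    cases i with
    | zero => exact (ENNReal.ofReal_pos.mpr hc0pos).ne'
    | succ j => exact (ENNReal.ofReal_pos.mpr (hcipos (j + 1) (by omega) hi)).ne'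
  have hKtop : ∀ i, K i ≠ ∞ := fun i => ENNReal.ofReal_ne_top
  have hP0 : ∀ m, m ≤ k → P m ≠ 0 := by
    intro m hm
    rw [hPdef]
    simp only [ne_eq, Finset.prod_eq_zero_iff, not_exists, not_and]
    intro i hi
    exact hK0 i (by simp at hi; omega)
  have hPtop : ∀ m, P m ≠ ∞ := by
    intro m
    rw [hPdef]
    exact (ENNReal.prod_lt_top (fun i _ => (hKtop i).lt_top)).ne
  -- the main filtering recursion
  have hQ : ∀ m, m ≤ k →
      Measure.map (fun x : (Fin p → ℝ) × (Fin n → ℝ) => (thetaFlow MΘ m x.1, M1 m x))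
          (ηΘ.prod (η (m + 1))) =
        (volume : Measure ((Fin p → ℝ) × (Fin n → ℝ))).withDensity
          (fun x => jIter F m x.1 x.2 / P m) := by
    intro m
    induction m with
    | zero =>
      intro hm
      haveI := hηprob 0 (by omega)
      haveI := hηprob 1 (by omega)
      have hproj : Measurable (fun w : (Fin p → ℝ) × (Fin n → ℝ) × (Fin n → ℝ) =>
          (w.1, w.2.2)) := measurable_fst.prodMk measurable_snd.snd
      have hG0 : Measurable (fun x : (Fin p → ℝ) × (Fin n → ℝ) =>
          (thetaFlow MΘ 0 x.1, M1 0 x)) :=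
        ((hTmeas 0 hm).comp measurable_fst).prodMk (hM1 0 hm)
      have hT0 : Measurable (fun w : (Fin p → ℝ) × (Fin n → ℝ) × (Fin n → ℝ) =>
          (MΘ 0 w.1, M0 0 w, M1 0 (w.1, w.2.2))) :=
        ((hMΘ 0 hm).comp measurable_fst).prodMk
          ((hM0 0 hm).prodMk ((hM1 0 hm).comp (measurable_fst.prodMk measurable_snd.snd)))
      have hdens : Measurable (fun w : (Fin p → ℝ) × (Fin n → ℝ) × (Fin n → ℝ) =>
          ENNReal.ofReal (jpotential π₀ q g 0 w.1 w.2.1 w.2.2 / c 0)) :=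
        ((hjmeas 0 hm).div_const _).ennreal_ofReal
      have h1 : ηΘ.prod (η 1) = Measure.map
          (fun w : (Fin p → ℝ) × (Fin n → ℝ) × (Fin n → ℝ) => (w.1, w.2.2))
          (ηΘ.prod ((η 0).prod (η 1))) := (map_proj13_prod _ _ _).symm
      rw [h1, Measure.map_map hG0 hproj]
      have h2 : ((fun x : (Fin p → ℝ) × (Fin n → ℝ) => (thetaFlow MΘ 0 x.1, M1 0 x)) ∘
            (fun w : (Fin p → ℝ) × (Fin n → ℝ) × (Fin n → ℝ) => (w.1, w.2.2)))
          = ((fun w : (Fin p → ℝ) × (Fin n → ℝ) × (Fin n → ℝ) => (w.1, w.2.2)) ∘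
            (fun w : (Fin p → ℝ) × (Fin n → ℝ) × (Fin n → ℝ) =>
              (MΘ 0 w.1, M0 0 w, M1 0 (w.1, w.2.2)))) := rfl
      rw [h2, ← Measure.map_map hproj hT0, hmap0]
      have hvol3 : (volume : Measure ((Fin p → ℝ) × (Fin n → ℝ) × (Fin n → ℝ)))
          = (volume : Measure (Fin p → ℝ)).prod
            ((volume : Measure (Fin n → ℝ)).prod (volume : Measure (Fin n → ℝ))) := by
        rw [Measure.volume_eq_prod, Measure.volume_eq_prod]
      rw [hvol3, map_proj13_withDensity _ _ _ hdens, ← Measure.volume_eq_prod]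
      congr 1
      funext x
      have hpt : ∀ b, ENNReal.ofReal (jpotential π₀ q g 0 x.1 b x.2 / c 0)
          = F 0 x.1 b x.2 * (K 0)⁻¹ := by
        intro b
        simp only [hFdef, hKdef]
        rw [ENNReal.ofReal_div_of_pos hc0pos, div_eq_mul_inv]
      simp_rw [hpt]
      rw [lintegral_mul_const' _ _ (ENNReal.inv_ne_top.mpr (hK0 0 (by omega)))]
      show (∫⁻ b, F 0 x.1 b x.2) * (K 0)⁻¹ = jIter F 0 x.1 x.2 / P 0
      rw [div_eq_mul_inv]
      congr 1
      rw [hPdef]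
      simp
    | succ m ih =>
      intro hm
      have hm' : m ≤ k := by omega
      have IH := ih hm'
      haveI := hηprob (m + 1) (by omega)
      haveI := hηprob (m + 2) (by omega)
      have hcpos : 0 < c (m + 1) := hcipos (m + 1) (by omega) hm
      have hKne : K (m + 1) ≠ 0 := hK0 (m + 1) hm
      have hKinvtop : (K (m + 1))⁻¹ ≠ ∞ := ENNReal.inv_ne_top.mpr hKne
      have hPinvtop : (P m)⁻¹ ≠ ∞ := ENNReal.inv_ne_top.mpr (hP0 m hm')
      have hTm := hTmeas m hm'
      have hGm : Measurable (fun x : (Fin p → ℝ) × (Fin n → ℝ) =>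
          (thetaFlow MΘ m x.1, M1 m x)) := (hTm.comp measurable_fst).prodMk (hM1 m hm')
      have hG' : Measurable (fun x : (Fin p → ℝ) × (Fin n → ℝ) =>
          (thetaFlow MΘ (m + 1) x.1, M1 (m + 1) x)) :=
        ((hTmeas (m + 1) hm).comp measurable_fst).prodMk (hM1 (m + 1) hm)
      have hT' : Measurable (fun w : (Fin p → ℝ) × (Fin n → ℝ) × (Fin n → ℝ) =>
          (MΘ (m + 1) w.1, M0 (m + 1) w, M1 (m + 1) (w.1, w.2.2))) :=
        ((hMΘ (m + 1) hm).comp measurable_fst).prodMk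
          ((hM0 (m + 1) hm).prodMk ((hM1 (m + 1) hm).comp
            (measurable_fst.prodMk measurable_snd.snd)))
      have hproj : Measurable (fun w : (Fin p → ℝ) × (Fin n → ℝ) × (Fin n → ℝ) =>
          (w.1, w.2.2)) := measurable_fst.prodMk measurable_snd.snd
      have hmap := hmapi (m + 1) (by omega) hm
      simp only [Nat.add_sub_cancel] at hmap
      have hψm : Measurable (fun t : (Fin p → ℝ) × (Fin n → ℝ) =>
          jIter F m t.1 t.2 / P m) := (hImeas m hm').div measurable_const
      have hvol3 : (volume : Measure ((Fin p → ℝ) × (Fin n → ℝ) × (Fin n → ℝ)))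
          = (volume : Measure (Fin p → ℝ)).prod
            ((volume : Measure (Fin n → ℝ)).prod (volume : Measure (Fin n → ℝ))) := by
        rw [Measure.volume_eq_prod, Measure.volume_eq_prod]
      have hvol2 : (volume : Measure ((Fin p → ℝ) × (Fin n → ℝ)))
          = (volume : Measure (Fin p → ℝ)).prod (volume : Measure (Fin n → ℝ)) :=
        Measure.volume_eq_prod _ _
      have hdensmeas : Measurable (fun v : (Fin p → ℝ) × (Fin n → ℝ) × (Fin n → ℝ) =>
          ENNReal.ofReal (eΘ v.1 * e (m + 1) v.2.1 *
            jpotential π₀ q g (m + 1) (thetaFlow MΘ m v.1) (M1 m (v.1, v.2.1)) v.2.2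
            / c (m + 1))) := by
        refine Measurable.ennreal_ofReal (Measurable.div_const ?_ _)
        refine Measurable.mul (Measurable.mul ?_ ?_) ?_
        · exact heΘmeas.comp measurable_fst
        · exact (hemeas (m + 1) (by omega)).comp measurable_snd.fst
        · exact (hjmeas (m + 1) hm).comp
            ((hTm.comp measurable_fst).prodMk
              (((hM1 m hm').comp (measurable_fst.prodMk measurable_snd.fst)).prodMk
                measurable_snd.snd))
      have hdens_eq : ∀ (a : Fin p → ℝ) (b cc : Fin n → ℝ),
          ENNReal.ofReal (eΘ a * e (m + 1) b *
            jpotential π₀ q g (m + 1) (thetaFlow MΘ m a) (M1 m (a, b)) cc / c (m + 1))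
          = ENNReal.ofReal (eΘ a) * ENNReal.ofReal (e (m + 1) b) *
            F (m + 1) (thetaFlow MΘ m a) (M1 m (a, b)) cc * (K (m + 1))⁻¹ := by
        intro a b cc
        simp only [hFdef, hKdef]
        rw [ENNReal.ofReal_div_of_pos hcpos, div_eq_mul_inv,
          ENNReal.ofReal_mul (mul_nonneg (heΘpos a).le (hepos (m + 1) (by omega) b).le),
          ENNReal.ofReal_mul (heΘpos a).le]
      ext s hs
      rw [Measure.map_apply hG' hs]
      have hφmeas : Measurable (fun v : (Fin p → ℝ) × (Fin n → ℝ) × (Fin n → ℝ) =>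
          Set.indicator s (fun _ => (1:ℝ≥0∞)) (thetaFlow MΘ m v.1, v.2.2)) :=
        (measurable_const.indicator hs).comp
          ((hTm.comp measurable_fst).prodMk measurable_snd.snd)
      have hFcc : Measurable (Function.uncurry fun (t : (Fin p → ℝ) × (Fin n → ℝ))
          (cc : Fin n → ℝ) => F (m + 1) t.1 t.2 cc *
            Set.indicator s (fun _ => (1:ℝ≥0∞)) (t.1, cc)) := by
        refine Measurable.mul ?_ ?_
        · exact (hFmeas (m + 1) hm).comp
            (measurable_fst.fst.prodMk (measurable_fst.snd.prodMk measurable_snd))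
        · exact (measurable_const.indicator hs).comp
            (measurable_fst.fst.prodMk measurable_snd)
      have hΦmeas : Measurable (fun t : (Fin p → ℝ) × (Fin n → ℝ) =>
          ∫⁻ cc, F (m + 1) t.1 t.2 cc *
            Set.indicator s (fun _ => (1:ℝ≥0∞)) (t.1, cc)) := hFcc.lintegral_prod_right
      have hΦGm : Measurable (fun x : (Fin p → ℝ) × (Fin n → ℝ) =>
          ∫⁻ cc, F (m + 1) (thetaFlow MΘ m x.1) (M1 m x) cc *
            Set.indicator s (fun _ => (1:ℝ≥0∞)) (thetaFlow MΘ m x.1, cc)) :=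
        hΦmeas.comp hGm
      calc (ηΘ.prod (η (m + 2)))
            ((fun x : (Fin p → ℝ) × (Fin n → ℝ) =>
              (thetaFlow MΘ (m + 1) x.1, M1 (m + 1) x)) ⁻¹' s)
          = ∫⁻ x : (Fin p → ℝ) × (Fin n → ℝ), Set.indicator s (fun _ => (1:ℝ≥0∞))
              (thetaFlow MΘ (m + 1) x.1, M1 (m + 1) x) ∂(ηΘ.prod (η (m + 2))) :=
            (lintegral_indicator_one_comp hG' hs).symm
        _ = ∫⁻ x : (Fin p → ℝ) × (Fin n → ℝ), Set.indicator s (fun _ => (1:ℝ≥0∞))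
              (thetaFlow MΘ (m + 1) x.1, M1 (m + 1) x)
              ∂(Measure.map (fun w : (Fin p → ℝ) × (Fin n → ℝ) × (Fin n → ℝ) =>
                (w.1, w.2.2)) (ηΘ.prod ((η (m + 1)).prod (η (m + 2))))) := by
            rw [map_proj13_prod]
        _ = ∫⁻ w : (Fin p → ℝ) × (Fin n → ℝ) × (Fin n → ℝ),
              Set.indicator s (fun _ => (1:ℝ≥0∞))
                (thetaFlow MΘ (m + 1) w.1, M1 (m + 1) (w.1, w.2.2))
              ∂(ηΘ.prod ((η (m + 1)).prod (η (m + 2)))) :=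
            lintegral_map ((measurable_const.indicator hs).comp hG') hproj
        _ = ∫⁻ w : (Fin p → ℝ) × (Fin n → ℝ) × (Fin n → ℝ),
              (fun v : (Fin p → ℝ) × (Fin n → ℝ) × (Fin n → ℝ) =>
                Set.indicator s (fun _ => (1:ℝ≥0∞)) (thetaFlow MΘ m v.1, v.2.2))
              ((fun w : (Fin p → ℝ) × (Fin n → ℝ) × (Fin n → ℝ) =>
                (MΘ (m + 1) w.1, M0 (m + 1) w, M1 (m + 1) (w.1, w.2.2))) w)
              ∂(ηΘ.prod ((η (m + 1)).prod (η (m + 2)))) := rfl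
        _ = ∫⁻ v : (Fin p → ℝ) × (Fin n → ℝ) × (Fin n → ℝ),
              Set.indicator s (fun _ => (1:ℝ≥0∞)) (thetaFlow MΘ m v.1, v.2.2)
              ∂(Measure.map (fun w : (Fin p → ℝ) × (Fin n → ℝ) × (Fin n → ℝ) =>
                (MΘ (m + 1) w.1, M0 (m + 1) w, M1 (m + 1) (w.1, w.2.2)))
                (ηΘ.prod ((η (m + 1)).prod (η (m + 2))))) :=
            (lintegral_map hφmeas hT').symm
        _ = ∫⁻ v : (Fin p → ℝ) × (Fin n → ℝ) × (Fin n → ℝ),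
              ENNReal.ofReal (eΘ v.1 * e (m + 1) v.2.1 *
                jpotential π₀ q g (m + 1) (thetaFlow MΘ m v.1) (M1 m (v.1, v.2.1)) v.2.2
                / c (m + 1)) *
              Set.indicator s (fun _ => (1:ℝ≥0∞)) (thetaFlow MΘ m v.1, v.2.2) ∂volume := by
            rw [hmap, lintegral_withDensity_eq_lintegral_mul _ hdensmeas hφmeas]
            rfl
        _ = (K (m + 1))⁻¹ * ∫⁻ a, ENNReal.ofReal (eΘ a) *
              ∫⁻ b, ENNReal.ofReal (e (m + 1) b) *
                ∫⁻ cc, F (m + 1) (thetaFlow MΘ m a) (M1 m (a, b)) cc *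
                  Set.indicator s (fun _ => (1:ℝ≥0∞)) (thetaFlow MΘ m a, cc) := by
            rw [hvol3, lintegral_prod (fun v : (Fin p → ℝ) × (Fin n → ℝ) × (Fin n → ℝ) =>
                ENNReal.ofReal (eΘ v.1 * e (m + 1) v.2.1 *
                  jpotential π₀ q g (m + 1) (thetaFlow MΘ m v.1) (M1 m (v.1, v.2.1)) v.2.2
                  / c (m + 1)) *
                Set.indicator s (fun _ => (1:ℝ≥0∞)) (thetaFlow MΘ m v.1, v.2.2)) ((hdensmeas.mul hφmeas).aemeasurable),
              ← lintegral_const_mul' _ _ hKinvtop]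
            refine lintegral_congr fun a => ?_
            have hmeasa : Measurable (fun z : (Fin n → ℝ) × (Fin n → ℝ) =>
                ENNReal.ofReal (eΘ a * e (m + 1) z.1 * jpotential π₀ q g (m + 1)
                  (thetaFlow MΘ m a) (M1 m (a, z.1)) z.2 / c (m + 1)) *
                Set.indicator s (fun _ => (1:ℝ≥0∞)) (thetaFlow MΘ m a, z.2)) :=
              (hdensmeas.mul hφmeas).comp measurable_prodMk_left
            refine Eq.trans (lintegral_prod _ hmeasa.aemeasurable) ?_
            have hbcc : ∀ b : Fin n → ℝ,
                (∫⁻ cc, ENNReal.ofReal (eΘ a * e (m + 1) b *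
                  jpotential π₀ q g (m + 1) (thetaFlow MΘ m a) (M1 m (a, b)) cc / c (m + 1)) *
                  Set.indicator s (fun _ => (1:ℝ≥0∞)) (thetaFlow MΘ m a, cc))
                = (ENNReal.ofReal (eΘ a) * (K (m + 1))⁻¹) *
                  (ENNReal.ofReal (e (m + 1) b) *
                    ∫⁻ cc, F (m + 1) (thetaFlow MΘ m a) (M1 m (a, b)) cc *
                      Set.indicator s (fun _ => (1:ℝ≥0∞)) (thetaFlow MΘ m a, cc)) := by
              intro b
              rw [← mul_assoc, ← lintegral_const_mul' ((ENNReal.ofReal (eΘ a) * (K (m + 1))⁻¹) *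
                  ENNReal.ofReal (e (m + 1) b)) _
                (ENNReal.mul_ne_top (ENNReal.mul_ne_top ENNReal.ofReal_ne_top hKinvtop)
                  ENNReal.ofReal_ne_top)]
              refine lintegral_congr fun cc => ?_
              rw [hdens_eq a b cc]
              ring
            refine Eq.trans (lintegral_congr fun b => hbcc b) ?_
            rw [lintegral_const_mul' _ _
              (ENNReal.mul_ne_top ENNReal.ofReal_ne_top hKinvtop)]
            ring
        _ = (K (m + 1))⁻¹ * ∫⁻ t : (Fin p → ℝ) × (Fin n → ℝ),
              (jIter F m t.1 t.2 / P m) *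
              ∫⁻ cc, F (m + 1) t.1 t.2 cc *
                Set.indicator s (fun _ => (1:ℝ≥0∞)) (t.1, cc) ∂volume := by
            congr 1
            have hsecb : ∀ a : Fin p → ℝ, Measurable (fun b : Fin n → ℝ =>
                ∫⁻ cc, F (m + 1) (thetaFlow MΘ m a) (M1 m (a, b)) cc *
                  Set.indicator s (fun _ => (1:ℝ≥0∞)) (thetaFlow MΘ m a, cc)) := by
              intro a
              exact hΦmeas.comp (measurable_const.prodMk
                ((hM1 m hm').comp (measurable_const.prodMk measurable_id)))
            have hΨmeas : Measurable (fun a : Fin p → ℝ =>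
                ∫⁻ b, (∫⁻ cc, F (m + 1) (thetaFlow MΘ m a) (M1 m (a, b)) cc *
                  Set.indicator s (fun _ => (1:ℝ≥0∞)) (thetaFlow MΘ m a, cc))
                  ∂(η (m + 1))) := by
              have : Measurable (Function.uncurry fun (a : Fin p → ℝ) (b : Fin n → ℝ) =>
                  ∫⁻ cc, F (m + 1) (thetaFlow MΘ m a) (M1 m (a, b)) cc *
                    Set.indicator s (fun _ => (1:ℝ≥0∞)) (thetaFlow MΘ m a, cc)) :=
                hΦGm.comp (measurable_fst.prodMk measurable_snd)
              exact this.lintegral_prod_right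
            calc ∫⁻ a, ENNReal.ofReal (eΘ a) *
                  ∫⁻ b, ENNReal.ofReal (e (m + 1) b) *
                    ∫⁻ cc, F (m + 1) (thetaFlow MΘ m a) (M1 m (a, b)) cc *
                      Set.indicator s (fun _ => (1:ℝ≥0∞)) (thetaFlow MΘ m a, cc)
                = ∫⁻ a, (∫⁻ b, (∫⁻ cc, F (m + 1) (thetaFlow MΘ m a) (M1 m (a, b)) cc *
                      Set.indicator s (fun _ => (1:ℝ≥0∞)) (thetaFlow MΘ m a, cc))
                    ∂(η (m + 1))) ∂ηΘ := by
                  rw [hηΘd, lintegral_withDensity_eq_lintegral_mul _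
                    heΘmeas.ennreal_ofReal hΨmeas]
                  refine lintegral_congr fun a => ?_
                  show ENNReal.ofReal (eΘ a) * _ =
                    ENNReal.ofReal (eΘ a) * ∫⁻ b, (∫⁻ cc, F (m + 1) (thetaFlow MΘ m a)
                      (M1 m (a, b)) cc * Set.indicator s (fun _ => (1:ℝ≥0∞))
                      (thetaFlow MΘ m a, cc)) ∂(η (m + 1))
                  congr 1
                  rw [hηd (m + 1) (by omega), lintegral_withDensity_eq_lintegral_mul _
                    (hemeas (m + 1) (by omega)).ennreal_ofReal (hsecb a)]
                  rfl
              _ = ∫⁻ x : (Fin p → ℝ) × (Fin n → ℝ),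
                    (∫⁻ cc, F (m + 1) (thetaFlow MΘ m x.1) (M1 m x) cc *
                      Set.indicator s (fun _ => (1:ℝ≥0∞)) (thetaFlow MΘ m x.1, cc))
                    ∂(ηΘ.prod (η (m + 1))) :=
                  (lintegral_prod _ hΦGm.aemeasurable).symm
              _ = ∫⁻ t : (Fin p → ℝ) × (Fin n → ℝ),
                    (∫⁻ cc, F (m + 1) t.1 t.2 cc *
                      Set.indicator s (fun _ => (1:ℝ≥0∞)) (t.1, cc))
                    ∂(Measure.map (fun x : (Fin p → ℝ) × (Fin n → ℝ) =>
                      (thetaFlow MΘ m x.1, M1 m x)) (ηΘ.prod (η (m + 1)))) :=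
                  (lintegral_map hΦmeas hGm).symm
              _ = ∫⁻ t : (Fin p → ℝ) × (Fin n → ℝ),
                    (jIter F m t.1 t.2 / P m) *
                    ∫⁻ cc, F (m + 1) t.1 t.2 cc *
                      Set.indicator s (fun _ => (1:ℝ≥0∞)) (t.1, cc) ∂volume := by
                  rw [IH, lintegral_withDensity_eq_lintegral_mul _ hψm hΦmeas]
                  rfl
        _ = ((volume : Measure ((Fin p → ℝ) × (Fin n → ℝ))).withDensity
              (fun x => jIter F (m + 1) x.1 x.2 / P (m + 1))) s := by
            have hswap : ∀ θ : Fin p → ℝ,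
                (∫⁻ z, (jIter F m θ z / P m) *
                  ∫⁻ cc, F (m + 1) θ z cc *
                    Set.indicator s (fun _ => (1:ℝ≥0∞)) (θ, cc))
                = ∫⁻ cc, Set.indicator s (fun _ => (1:ℝ≥0∞)) (θ, cc) *
                    (jIter F (m + 1) θ cc * (P m)⁻¹) := by
              intro θ
              have hmeascc : ∀ z : Fin n → ℝ, Measurable (fun cc : Fin n → ℝ =>
                  F (m + 1) θ z cc * Set.indicator s (fun _ => (1:ℝ≥0∞)) (θ, cc)) := by
                intro z
                exact (((hFmeas (m + 1) hm).comp (measurable_const.prodMk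
                  (measurable_const.prodMk measurable_id))).mul
                  ((measurable_const.indicator hs).comp
                    (measurable_const.prodMk measurable_id)))
              have hsw : Measurable (Function.uncurry fun (z cc : Fin n → ℝ) =>
                  jIter F m θ z * F (m + 1) θ z cc *
                    Set.indicator s (fun _ => (1:ℝ≥0∞)) (θ, cc) * (P m)⁻¹) := by
                refine Measurable.mul (Measurable.mul (Measurable.mul ?_ ?_) ?_) measurable_const
                · exact (hImeas m hm').comp (measurable_const.prodMk measurable_fst)
                · exact (hFmeas (m + 1) hm).comp
                    (measurable_const.prodMk (measurable_fst.prodMk measurable_snd))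
                · exact (measurable_const.indicator hs).comp
                    (measurable_const.prodMk measurable_snd)
              calc (∫⁻ z, (jIter F m θ z / P m) *
                    ∫⁻ cc, F (m + 1) θ z cc *
                      Set.indicator s (fun _ => (1:ℝ≥0∞)) (θ, cc))
                  = ∫⁻ z, ∫⁻ cc, jIter F m θ z * F (m + 1) θ z cc *
                      Set.indicator s (fun _ => (1:ℝ≥0∞)) (θ, cc) * (P m)⁻¹ := by
                    refine lintegral_congr fun z => ?_
                    rw [← lintegral_const_mul (jIter F m θ z / P m) (hmeascc z)]
                    refine lintegral_congr fun cc => ?_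
                    rw [div_eq_mul_inv]
                    ring
                _ = ∫⁻ cc, ∫⁻ z, jIter F m θ z * F (m + 1) θ z cc *
                      Set.indicator s (fun _ => (1:ℝ≥0∞)) (θ, cc) * (P m)⁻¹ :=
                    lintegral_lintegral_swap hsw.aemeasurable
                _ = ∫⁻ cc, Set.indicator s (fun _ => (1:ℝ≥0∞)) (θ, cc) *
                      (jIter F (m + 1) θ cc * (P m)⁻¹) := by
                    refine lintegral_congr fun cc => ?_
                    rw [lintegral_mul_const' _ _ hPinvtop, lintegral_mul_const' _ _
                      (Set.indicator_le (fun _ _ => le_refl 1) (θ, cc)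
                        |>.trans_lt ENNReal.one_lt_top |>.ne)]
                    have hIeq : jIter F (m + 1) θ cc
                        = ∫⁻ z, jIter F m θ z * F (m + 1) θ z cc := rfl
                    rw [hIeq]
                    ring
            have hψ'meas : Measurable (fun x : (Fin p → ℝ) × (Fin n → ℝ) =>
                jIter F (m + 1) x.1 x.2 / P (m + 1)) :=
              (hImeas (m + 1) hm).div measurable_const
            have hLHS : (K (m + 1))⁻¹ * (∫⁻ t : (Fin p → ℝ) × (Fin n → ℝ),
                  (jIter F m t.1 t.2 / P m) *
                  ∫⁻ cc, F (m + 1) t.1 t.2 cc *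
                    Set.indicator s (fun _ => (1:ℝ≥0∞)) (t.1, cc) ∂volume)
                = ∫⁻ θ, ∫⁻ cc, Set.indicator s (fun _ => (1:ℝ≥0∞)) (θ, cc) *
                    (jIter F (m + 1) θ cc / P (m + 1)) := by
              rw [hvol2, lintegral_prod (fun t : (Fin p → ℝ) × (Fin n → ℝ) =>
                  (jIter F m t.1 t.2 / P m) *
                  ∫⁻ cc, F (m + 1) t.1 t.2 cc *
                    Set.indicator s (fun _ => (1:ℝ≥0∞)) (t.1, cc)) ((hψm.mul hΦmeas).aemeasurable),
                ← lintegral_const_mul' _ _ hKinvtop]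
              refine lintegral_congr fun θ => ?_
              rw [hswap θ, ← lintegral_const_mul' _ _ hKinvtop]
              refine lintegral_congr fun cc => ?_
              rw [div_eq_mul_inv (jIter F (m + 1) θ cc),
                show P (m + 1) = P m * K (m + 1) by rw [hPdef]; exact Finset.prod_range_succ _ _,
                ENNReal.mul_inv (Or.inl (hP0 m hm')) (Or.inl (hPtop m))]
              ring
            rw [hLHS, withDensity_apply _ hs, ← lintegral_indicator hs]
            have hs_ind : ∀ x : (Fin p → ℝ) × (Fin n → ℝ),
                Set.indicator s (fun x : (Fin p → ℝ) × (Fin n → ℝ) =>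
                  jIter F (m + 1) x.1 x.2 / P (m + 1)) x
                = Set.indicator s (fun _ => (1:ℝ≥0∞)) x *
                  (jIter F (m + 1) x.1 x.2 / P (m + 1)) := by
              intro x; by_cases hx : x ∈ s <;> simp [Set.indicator, hx]
            simp_rw [hs_ind]
            rw [hvol2, lintegral_prod (fun x : (Fin p → ℝ) × (Fin n → ℝ) =>
                  Set.indicator s (fun _ => (1:ℝ≥0∞)) x * (jIter F (m + 1) x.1 x.2 / P (m + 1)))
              (((measurable_const.indicator hs).mul hψ'meas).aemeasurable)]
  -- final assembly
  haveI := hηprob (k + 1) le_rfl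
  have hGk : Measurable (fun x : (Fin p → ℝ) × (Fin n → ℝ) =>
      (thetaFlow MΘ k x.1, M1 k x)) :=
    ((hTmeas k le_rfl).comp measurable_fst).prodMk (hM1 k le_rfl)
  have hvol2 : (volume : Measure ((Fin p → ℝ) × (Fin n → ℝ)))
      = (volume : Measure (Fin p → ℝ)).prod (volume : Measure (Fin n → ℝ)) :=
    Measure.volume_eq_prod _ _
  have hvolPi : (volume : Measure ((Fin p → ℝ) × (Fin (k + 2) → Fin n → ℝ)))
      = (volume : Measure (Fin p → ℝ)).prod
        (volume : Measure (Fin (k + 2) → Fin n → ℝ)) :=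
    Measure.volume_eq_prod _ _
  set T : ℝ≥0∞ := ENNReal.ofReal (∫ w, jsmoothingDensity (k := k) π₀ q g w) with hTdef
  have hTne : T ≠ 0 := (ENNReal.ofReal_pos.mpr hρmass).ne'
  have hTtop : T ≠ ∞ := ENNReal.ofReal_ne_top
  have hTinvtop : T⁻¹ ≠ ∞ := ENNReal.inv_ne_top.mpr hTne
  have hρnn : ∀ w, 0 ≤ jsmoothingDensity (k := k) π₀ q g w := fun w => (hρpos w).le
  have hcomp : ∀ (j1 j2 : Fin (k + 2)), Measurable
      (fun w : (Fin p → ℝ) × (Fin (k + 2) → Fin n → ℝ) =>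
        ((w.1, w.2 j1, w.2 j2) : (Fin p → ℝ) × (Fin n → ℝ) × (Fin n → ℝ))) := by
    intro j1 j2
    refine Measurable.prodMk measurable_fst (Measurable.prodMk ?_ ?_)
    · exact (measurable_pi_apply j1).comp measurable_snd
    · exact (measurable_pi_apply j2).comp measurable_snd
  have hρmeas : Measurable (jsmoothingDensity (k := k) π₀ q g) := by
    unfold jsmoothingDensity
    refine Finset.measurable_prod _ fun i _ => ?_
    exact (hjmeas i (Nat.lt_succ_iff.mp i.isLt)).comp (hcomp i.castSucc i.succ)
  have hproj2 : Measurable (fun w : (Fin p → ℝ) × (Fin (k + 2) → Fin n → ℝ) =>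
      (w.1, w.2 (Fin.last (k + 1)))) :=
    measurable_fst.prodMk ((measurable_pi_apply _).comp measurable_snd)
  have hdW : ∀ w : (Fin p → ℝ) × (Fin (k + 2) → Fin n → ℝ),
      ENNReal.ofReal (jsmoothingDensity (k := k) π₀ q g w /
        ∫ w, jsmoothingDensity (k := k) π₀ q g w)
      = (∏ i : Fin (k + 1), F i w.1 (w.2 i.castSucc) (w.2 i.succ)) * T⁻¹ := by
    intro w
    rw [ENNReal.ofReal_div_of_pos hρmass, div_eq_mul_inv, hTdef]
    congr 1
    unfold jsmoothingDensity
    rw [ENNReal.ofReal_prod_of_nonneg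
      (fun (i : Fin (k + 1)) _ => hfnn i.val (Nat.lt_succ_iff.mp i.isLt) _ _ _)]
  have hbig : Measurable (fun w : (Fin p → ℝ) × (Fin (k + 2) → Fin n → ℝ) =>
      ∏ i : Fin (k + 1), F i w.1 (w.2 i.castSucc) (w.2 i.succ)) := by
    refine Finset.measurable_prod _ fun i _ => ?_
    exact (hFmeas i (Nat.lt_succ_iff.mp i.isLt)).comp (hcomp i.castSucc i.succ)
  have hRHSeq : Measure.map (fun w : (Fin p → ℝ) × (Fin (k + 2) → Fin n → ℝ) =>
        (w.1, w.2 (Fin.last (k + 1))))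
      ((volume : Measure ((Fin p → ℝ) × (Fin (k + 2) → Fin n → ℝ))).withDensity
        (fun w => ENNReal.ofReal (jsmoothingDensity (k := k) π₀ q g w /
          ∫ w, jsmoothingDensity (k := k) π₀ q g w)))
      = (volume : Measure ((Fin p → ℝ) × (Fin n → ℝ))).withDensity
        (fun x => jIter F k x.1 x.2 * T⁻¹) := by
    ext s hs
    rw [Measure.map_apply hproj2 hs, withDensity_apply _ (hproj2 hs),
      ← lintegral_indicator (hproj2 hs), withDensity_apply _ hs, ← lintegral_indicator hs]
    have hptw : ∀ w : (Fin p → ℝ) × (Fin (k + 2) → Fin n → ℝ),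
        Set.indicator ((fun w : (Fin p → ℝ) × (Fin (k + 2) → Fin n → ℝ) =>
          (w.1, w.2 (Fin.last (k + 1)))) ⁻¹' s)
          (fun w => ENNReal.ofReal (jsmoothingDensity (k := k) π₀ q g w /
            ∫ w, jsmoothingDensity (k := k) π₀ q g w)) w
        = Set.indicator s (fun _ => (1:ℝ≥0∞)) (w.1, w.2 (Fin.last (k + 1))) *
          ((∏ i : Fin (k + 1), F i w.1 (w.2 i.castSucc) (w.2 i.succ)) * T⁻¹) := by
      intro w
      by_cases hw : (w.1, w.2 (Fin.last (k + 1))) ∈ s <;>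
        simp [Set.indicator, hw, hdW w]
    simp_rw [hptw]
    have hptw2 : ∀ x : (Fin p → ℝ) × (Fin n → ℝ),
        Set.indicator s (fun x : (Fin p → ℝ) × (Fin n → ℝ) =>
          jIter F k x.1 x.2 * T⁻¹) x
        = Set.indicator s (fun _ => (1:ℝ≥0∞)) x * (jIter F k x.1 x.2 * T⁻¹) := by
      intro x; by_cases hx : x ∈ s <;> simp [Set.indicator, hx]
    simp_rw [hptw2]
    rw [hvolPi, hvol2]
    have hm1 : Measurable (fun w : (Fin p → ℝ) × (Fin (k + 2) → Fin n → ℝ) =>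
        Set.indicator s (fun _ => (1:ℝ≥0∞)) (w.1, w.2 (Fin.last (k + 1))) *
        ((∏ i : Fin (k + 1), F i w.1 (w.2 i.castSucc) (w.2 i.succ)) * T⁻¹)) :=
      ((measurable_const.indicator hs).comp hproj2).mul (hbig.mul measurable_const)
    have hm2 : Measurable (fun x : (Fin p → ℝ) × (Fin n → ℝ) =>
        Set.indicator s (fun _ => (1:ℝ≥0∞)) x * (jIter F k x.1 x.2 * T⁻¹)) :=
      (measurable_const.indicator hs).mul ((hImeas k le_rfl).mul measurable_const)
    rw [lintegral_prod _ hm1.aemeasurable]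
    rw [lintegral_prod _ hm2.aemeasurable]
    refine lintegral_congr fun θ => ?_
    refine Eq.trans (lintegral_pi_last_prod k (fun i hi => hFmeas i hi) hFtop θ T⁻¹ hTinvtop
      (fun cc => Set.indicator s (fun _ => (1:ℝ≥0∞)) (θ, cc))
      ((measurable_const.indicator hs).comp (measurable_const.prodMk measurable_id))
      (fun cc => ((Set.indicator_le (fun _ _ => le_refl 1) (θ, cc)).trans_lt
        ENNReal.one_lt_top).ne)) ?_
    exact lintegral_congr fun cc => rfl
  -- total masses
  have hmass1 : (∫⁻ x : (Fin p → ℝ) × (Fin n → ℝ), jIter F k x.1 x.2 ∂volume)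
      * (P k)⁻¹ = 1 := by
    have h2 : (Measure.map (fun x : (Fin p → ℝ) × (Fin n → ℝ) =>
        (thetaFlow MΘ k x.1, M1 k x)) (ηΘ.prod (η (k + 1)))) Set.univ = 1 := by
      rw [Measure.map_apply hGk MeasurableSet.univ]
      simp
    rw [hQ k le_rfl, withDensity_apply _ MeasurableSet.univ,
      Measure.restrict_univ] at h2
    calc (∫⁻ x : (Fin p → ℝ) × (Fin n → ℝ), jIter F k x.1 x.2 ∂volume) * (P k)⁻¹
        = ∫⁻ x : (Fin p → ℝ) × (Fin n → ℝ), jIter F k x.1 x.2 * (P k)⁻¹ ∂volume :=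
          (lintegral_mul_const' _ _ (ENNReal.inv_ne_top.mpr (hP0 k le_rfl))).symm
      _ = 1 := by
          rw [← h2]
          exact lintegral_congr fun x => (div_eq_mul_inv _ _).symm
  have hmass2 : (∫⁻ x : (Fin p → ℝ) × (Fin n → ℝ), jIter F k x.1 x.2 ∂volume)
      * T⁻¹ = 1 := by
    have h3 : (Measure.map (fun w : (Fin p → ℝ) × (Fin (k + 2) → Fin n → ℝ) =>
        (w.1, w.2 (Fin.last (k + 1))))
        ((volume : Measure ((Fin p → ℝ) × (Fin (k + 2) → Fin n → ℝ))).withDensity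
          (fun w => ENNReal.ofReal (jsmoothingDensity (k := k) π₀ q g w /
            ∫ w, jsmoothingDensity (k := k) π₀ q g w)))) Set.univ = 1 := by
      rw [Measure.map_apply hproj2 MeasurableSet.univ]
      rw [Set.preimage_univ, withDensity_apply _ MeasurableSet.univ, Measure.restrict_univ]
      have hpw : ∀ w : (Fin p → ℝ) × (Fin (k + 2) → Fin n → ℝ),
          ENNReal.ofReal (jsmoothingDensity (k := k) π₀ q g w /
            ∫ w, jsmoothingDensity (k := k) π₀ q g w)
          = ENNReal.ofReal (jsmoothingDensity (k := k) π₀ q g w) * T⁻¹ := by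
        intro w
        rw [ENNReal.ofReal_div_of_pos hρmass, div_eq_mul_inv, hTdef]
      simp_rw [hpw]
      rw [lintegral_mul_const' _ _ hTinvtop,
        ← ofReal_integral_eq_lintegral_ofReal hρint (Filter.Eventually.of_forall hρnn),
        ← hTdef]
      exact ENNReal.mul_inv_cancel hTne hTtop
    rw [hRHSeq, withDensity_apply _ MeasurableSet.univ, Measure.restrict_univ] at h3
    rw [← h3]
    exact (lintegral_mul_const' _ _ hTinvtop).symm
  have hPT : P k = T := by
    have e1 : (∫⁻ x : (Fin p → ℝ) × (Fin n → ℝ), jIter F k x.1 x.2 ∂volume) = P k := by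
      have h := congrArg (· * P k) hmass1
      simpa [mul_assoc, ENNReal.inv_mul_cancel (hP0 k le_rfl) (hPtop k)] using h
    have e2 : (∫⁻ x : (Fin p → ℝ) × (Fin n → ℝ), jIter F k x.1 x.2 ∂volume) = T := by
      have h := congrArg (· * T) hmass2
      simpa [mul_assoc, ENNReal.inv_mul_cancel hTne hTtop] using h
    rw [← e1, e2]
  rw [hQ k le_rfl, hRHSeq]
  congr 1
  funext x
  rw [hPT, div_eq_mul_inv]
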